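/- Let p, q, r be positive reals with pqr ≥ 2p², pqr ≥ 2q², pqr ≥ 2r² (condition (M1)). Then C(p,q,r) = p² + q² + r² - pqr ≤ 4. -/

import Mathlib

lemma aux_13 (p q r : ℝ) (hp : 0 < p) (hq : 0 < q) (hr : 0 < r)
    (hrq : r ≤ q) (hqp : q ≤ p) (h1 : 2 * p ^ 2 ≤ p * q * r) :
    p ^ 2 + q ^ 2 + r ^ 2 - p * q * r ≤ 4 := by
  have h2p : 2 * p ≤ q * r := by
    have := mul_le_mul_iff_of_pos_right hp |>.mpr (le_refl p)
    nlinarith [sq_nonneg p]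
  have hr2 : 2 ≤ r := by nlinarith
  nlinarith [mul_nonneg (sub_nonneg.2 hqp) (by nlinarith : (0:ℝ) ≤ q * r - p - q),
    mul_nonneg (by nlinarith : (0:ℝ) ≤ q ^ 2 - r ^ 2) (by linarith : (0:ℝ) ≤ r - 2),
    mul_nonneg (mul_nonneg (by linarith : (0:ℝ) ≤ r - 2) (by linarith : (0:ℝ) ≤ r - 2)) (by linarith : (0:ℝ) ≤ r + 1)]

theorem stmt_13 (p q r : ℝ) (hp : 0 < p) (hq : 0 < q) (hr : 0 < r)
    (h1 : 2 * p ^ 2 ≤ p * q * r) (h2 : 2 * q ^ 2 ≤ p * q * r)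
    (h3 : 2 * r ^ 2 ≤ p * q * r) :
    p ^ 2 + q ^ 2 + r ^ 2 - p * q * r ≤ 4 := by
  rcases le_total p q with hpq | hqp
  · rcases le_total q r with hqr | hrq
    · have := aux_13 r q p hr hq hp hpq hqr (by nlinarith)
      linarith
    · rcases le_total p r with hpr | hrp
      · have := aux_13 q r p hq hr hp hpr hrq (by nlinarith)
        linarith
      · have := aux_13 q p r hq hp hr hrp hpq (by nlinarith)
        linarith
  · rcases le_total p r with hpr | hrp
    · have := aux_13 r p q hr hp hq hqp hpr (by nlinarith)
      linarith
    · rcases le_total q r with hqr | hrq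
      · have := aux_13 p r q hp hr hq hqr hrp (by nlinarith)
        linarith
      · have := aux_13 p q r hp hq hr hrq hqp (by nlinarith)
        linarith
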